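/- In the transition system for the single-use one-way line T = F₁ ∥ L₁ ∥ L₂ ∥ F₂ (Figure 17), the input event c₂ never causes output d₁: in every run of T starting from the initial state in which input a₁ never occurs, the output event d₁ never occurs. -/

import Mathlib

open Classical

noncomputable section

abbrev BExpr (E : Type) := (E → Bool) → Bool

def BDependsOn {E : Type} (l : BExpr E) (V : Set E) : Prop :=
  ∀ σ τ : E → Bool, (∀ a ∈ V, σ a = τ a) → l σ = l τ

def IsFullConj {E : Type} (l : BExpr E) (V : Set E) : Prop :=
  ∃ p : E → Bool, ∀ σ : E → Bool, (l σ = true ↔ ∀ a ∈ V, σ a = p a)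

def Matches' {E : Type} (I : Set E) (l : BExpr E) (A : Set E) : Prop :=
  ∃ σ : E → Bool, (∀ a ∈ I, (σ a = true ↔ a ∈ A)) ∧ l σ = true

def Sat {E : Type} (l : BExpr E) : Prop := ∃ σ, l σ = true

structure TS (E : Type) where
  S : Type
  i : S
  Ev : Set E
  I : Set E
  Tran : Set (S × BExpr E × S)

namespace TS

variable {E : Type}

/-- Constraint 1: determinism/totality of matching. -/
def C1 (T : TS E) : Prop :=
  ∀ s : T.S, ∀ A : Set E, A ⊆ T.I →
    ∃! t : BExpr E × T.S, ((s, t.1, t.2) ∈ T.Tran ∧ Matches' T.I t.1 A)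

/-- Constraint 2: every label has the form x·y, x ∈ Bool(I), y ∈ Conj(E∖I). -/
def C2 (T : TS E) : Prop :=
  ∀ ⦃s : T.S⦄ ⦃l : BExpr E⦄ ⦃s' : T.S⦄, (s, l, s') ∈ T.Tran →
    ∃ x y : BExpr E, BDependsOn x T.I ∧ IsFullConj y (T.Ev \ T.I) ∧
      ∀ σ, l σ = (x σ && y σ)

inductive Reach (T : TS E) : T.S → Prop
  | init : Reach T T.i
  | step {s : T.S} {l : BExpr E} {s' : T.S} :
      Reach T s → (s, l, s') ∈ T.Tran → Sat l → Reach T s'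

/-- Constraint 3: all states reachable. -/
def C3 (T : TS E) : Prop := ∀ s : T.S, Reach T s

/-- Constraint 4: a single output subexpression per state. -/
def C4 (T : TS E) : Prop :=
  ∀ s : T.S, ∃ y : BExpr E, IsFullConj y (T.Ev \ T.I) ∧
    ∀ ⦃l : BExpr E⦄ ⦃s' : T.S⦄, (s, l, s') ∈ T.Tran →
      ∃ x : BExpr E, BDependsOn x T.I ∧ ∀ σ, l σ = (x σ && y σ)

def WF (T : TS E) : Prop := T.I ⊆ T.Ev

/-- θ / hiding of shared variables: existentially quantify them away. -/
def hide (H : Set E) (l : BExpr E) : BExpr E :=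
  fun σ => decide (∃ τ : E → Bool, (∀ a ∉ H, τ a = σ a) ∧ l τ = true)

/-- Product T' = P × Q. -/
def prod (P Q : TS E) : TS E where
  S := P.S × Q.S
  i := (P.i, Q.i)
  Ev := P.Ev ∪ Q.Ev
  I := P.I ∪ Q.I
  Tran := { t | ∃ lP lQ : BExpr E,
      (t.1.1, lP, t.2.2.1) ∈ P.Tran ∧ (t.1.2, lQ, t.2.2.2) ∈ Q.Tran ∧
      t.2.1 = fun σ => lP σ && lQ σ }

/-- Composition T = P ∥ Q: satisfiable product transitions with shared events hidden. -/
def comp (P Q : TS E) : TS E where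
  S := P.S × Q.S
  i := (P.i, Q.i)
  Ev := (P.Ev ∪ Q.Ev) \ (P.Ev ∩ Q.Ev)
  I := (P.I ∪ Q.I) \ (P.Ev ∩ Q.Ev)
  Tran := { t | ∃ lP lQ : BExpr E,
      (t.1.1, lP, t.2.2.1) ∈ P.Tran ∧ (t.1.2, lQ, t.2.2.2) ∈ Q.Tran ∧
      Sat (fun σ => lP σ && lQ σ) ∧
      t.2.1 = hide (P.Ev ∩ Q.Ev) (fun σ => lP σ && lQ σ) }

/-- Condition D: every shared event is an input of exactly one of the systems. -/
def SharedOK (P Q : TS E) : Prop :=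
  ∀ a ∈ P.Ev ∩ Q.Ev, (a ∈ P.I ∧ a ∉ Q.I) ∨ (a ∈ Q.I ∧ a ∉ P.I)

def Composable (P Q : TS E) : Prop :=
  P.WF ∧ Q.WF ∧ P.C1 ∧ P.C2 ∧ P.C3 ∧ Q.C1 ∧ Q.C2 ∧ Q.C3 ∧ SharedOK P Q ∧
  (P.C4 ∨ Q.C4) ∧
  (¬ P.C4 → P.Ev ∩ Q.Ev = P.Ev \ P.I) ∧
  (¬ Q.C4 → P.Ev ∩ Q.Ev = Q.Ev \ Q.I)

/-- A run of the system under input sequence A. -/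
def Run (T : TS E) (A : ℕ → Set E) (r : ℕ → T.S) : Prop :=
  r 0 = T.i ∧ ∀ n : ℕ, ∃ l : BExpr E,
    (r n, l, r (n + 1)) ∈ T.Tran ∧ Matches' T.I l (A n)

/-- Output event e occurs at time t of the run. -/
def EmitsAt (T : TS E) (A : ℕ → Set E) (r : ℕ → T.S) (e : E) (t : ℕ) : Prop :=
  ∃ l : BExpr E, (r t, l, r (t + 1)) ∈ T.Tran ∧ Matches' T.I l (A t) ∧
    ∀ σ : E → Bool, l σ = true → σ e = true

end TS

/-- Single-use unit-length line: inputs a,c; outputs b,d. -/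
def lineTS {E : Type} (a b c d : E) : TS E where
  S := Fin 4
  i := 0
  Ev := {a, b, c, d}
  I := {a, c}
  Tran := {
    (0, fun σ => !σ a && !σ c && (!σ b && !σ d), 0),
    (0, fun σ => σ a && !σ c && (!σ b && !σ d), 1),
    (0, fun σ => !σ a && σ c && (!σ b && !σ d), 2),
    (0, fun σ => σ a && σ c && (!σ b && !σ d), 3),
    (1, fun σ => σ b && !σ d, 3),
    (2, fun σ => !σ b && σ d, 3),
    (3, fun σ => !σ b && !σ d, 3) }

/-- Single-use unit fork: stem (in c, out b); branches (in a, out d) and (in e, out f). -/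
def forkTS {E : Type} (a b c d e f : E) : TS E where
  S := Fin 4
  i := 0
  Ev := {a, b, c, d, e, f}
  I := {a, c, e}
  Tran := {
    (0, fun σ => !σ a && !σ c && !σ e && (!σ b && !σ d && !σ f), 0),
    (0, fun σ => !σ a && σ c && !σ e && (!σ b && !σ d && !σ f), 1),
    (0, fun σ => (σ a || σ e) && !σ c && (!σ b && !σ d && !σ f), 2),
    (0, fun σ => (σ a || σ e) && σ c && (!σ b && !σ d && !σ f), 3),
    (1, fun σ => !σ b && σ d && σ f, 3),
    (2, fun σ => σ b && !σ d && !σ f, 3),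
    (3, fun σ => !σ b && !σ d && !σ f, 3) }

/- Events (as natural numbers): fork F₁ ports a₁=1, b₁=2, c₁=3, d₁=4, e₁=5, f₁=6;
fork F₂ ports a₂=7, b₂=8, c₂=9, d₂=10, e₂=11, f₂=12; the joints of the length-5
line L₁ use 20–23 (forward) and 30–33 (backward); the joints of the length-3 line
L₂ use 40–41 and 50–51. External interface: inputs a₁=1, c₂=9; outputs d₁=4, b₂=8. -/
def F1 : TS ℕ := forkTS 1 2 3 4 5 6
def F2 : TS ℕ := forkTS 7 8 9 10 11 12
def U1 : TS ℕ := lineTS 2 20 30 3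
def U2 : TS ℕ := lineTS 20 21 31 30
def U3 : TS ℕ := lineTS 21 22 32 31
def U4 : TS ℕ := lineTS 22 23 33 32
def U5 : TS ℕ := lineTS 23 7 10 33
def V1 : TS ℕ := lineTS 6 40 50 5
def V2 : TS ℕ := lineTS 40 41 51 50
def V3 : TS ℕ := lineTS 41 11 12 51

/-- The single-use one-way line T = F₁ ∥ L₁ ∥ L₂ ∥ F₂ of Figures 16/17. -/
def OneWay : TS ℕ :=
  TS.comp (TS.comp (TS.comp (TS.comp (TS.comp (TS.comp (TS.comp (TS.comp
    (TS.comp F1 U1) U2) U3) U4) U5) V1) V2) V3) F2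

def lineNext (s : Fin 4) (a c : Bool) : Fin 4 :=
  if s = 0 then (if a then (if c then 3 else 1) else (if c then 2 else 0)) else 3

def forkNext (s : Fin 4) (a c e : Bool) : Fin 4 :=
  if s = 0 then (if a || e then (if c then 3 else 2) else (if c then 1 else 0)) else 3

lemma line_step {E : Type} {a b c d : E} {s s' : Fin 4} {l : BExpr E}
    (h : (s, l, s') ∈ (lineTS a b c d).Tran) {σ : E → Bool} (hσ : l σ = true) :
    σ b = (s == 1) ∧ σ d = (s == 2) ∧ s' = lineNext s (σ a) (σ c) := by
  change _ ∈ (_ : Set (Fin 4 × BExpr E × Fin 4)) at h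
  simp only [lineTS, Set.mem_insert_iff, Set.mem_singleton_iff, Prod.mk.injEq] at h
  rcases h with ⟨h1,h2,h3⟩|⟨h1,h2,h3⟩|⟨h1,h2,h3⟩|⟨h1,h2,h3⟩|⟨h1,h2,h3⟩|⟨h1,h2,h3⟩|⟨h1,h2,h3⟩ <;>
    subst h1 <;> subst h2 <;> subst h3 <;>
    simp only [Bool.and_eq_true, Bool.not_eq_true'] at hσ <;>
    simp [lineNext, hσ.1, hσ.2] <;> simp_all
lemma fork_step {E : Type} {a b c d e f : E} {s s' : Fin 4} {l : BExpr E}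
    (h : (s, l, s') ∈ (forkTS a b c d e f).Tran) {σ : E → Bool} (hσ : l σ = true) :
    σ b = (s == 2) ∧ σ d = (s == 1) ∧ σ f = (s == 1) ∧ s' = forkNext s (σ a) (σ c) (σ e) := by
  change _ ∈ (_ : Set (Fin 4 × BExpr E × Fin 4)) at h
  simp only [forkTS, Set.mem_insert_iff, Set.mem_singleton_iff, Prod.mk.injEq] at h
  rcases h with ⟨h1,h2,h3⟩|⟨h1,h2,h3⟩|⟨h1,h2,h3⟩|⟨h1,h2,h3⟩|⟨h1,h2,h3⟩|⟨h1,h2,h3⟩|⟨h1,h2,h3⟩ <;>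
    subst h1 <;> subst h2 <;> subst h3 <;>
    simp only [Bool.and_eq_true, Bool.not_eq_true', Bool.or_eq_true] at hσ <;>
    simp [forkNext] <;> simp_all

lemma comp_peel {E : Type} {P Q : TS E} {s s' : P.S × Q.S} {l : BExpr E}
    (h : ((s, l, s') : (P.S × Q.S) × BExpr E × (P.S × Q.S)) ∈ (TS.comp P Q).Tran)
    {σ : E → Bool} (hσ : l σ = true) :
    ∃ τ : E → Bool, (∀ a ∉ P.Ev ∩ Q.Ev, τ a = σ a) ∧
      ∃ lP lQ : BExpr E, (s.1, lP, s'.1) ∈ P.Tran ∧ (s.2, lQ, s'.2) ∈ Q.Tran ∧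
        lP τ = true ∧ lQ τ = true := by
  obtain ⟨lP, lQ, hP, hQ, hsat, hl⟩ := h
  have hl' : l = TS.hide (P.Ev ∩ Q.Ev) (fun σ => lP σ && lQ σ) := hl
  rw [hl'] at hσ
  simp only [TS.hide] at hσ
  obtain ⟨τ, hag, hτ⟩ := of_decide_eq_true hσ
  rw [Bool.and_eq_true] at hτ
  exact ⟨τ, hag, lP, lQ, hP, hQ, hτ.1, hτ.2⟩
def P1 : TS ℕ := TS.comp F1 U1
def P2 : TS ℕ := TS.comp P1 U2
def P3 : TS ℕ := TS.comp P2 U3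
def P4 : TS ℕ := TS.comp P3 U4
def P5 : TS ℕ := TS.comp P4 U5
def P6 : TS ℕ := TS.comp P5 V1
def P7 : TS ℕ := TS.comp P6 V2
def P8 : TS ℕ := TS.comp P7 V3

lemma hB2 : ∀ x ∈ F1.Ev ∩ U1.Ev, x ∈ [2,3] := by
  intro x hx
  simp only [F1, U1, forkTS, lineTS, TS.comp, Set.mem_inter_iff, Set.mem_diff,
    Set.mem_union, Set.mem_insert_iff, Set.mem_singleton_iff] at hx
  simp only [List.mem_cons, List.not_mem_nil, or_false]
  omega

lemma hB3 : ∀ x ∈ P1.Ev ∩ U2.Ev, x ∈ [20,30] := by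
  intro x hx
  simp only [P1, F1, U1, U2, forkTS, lineTS, TS.comp, Set.mem_inter_iff, Set.mem_diff,
    Set.mem_union, Set.mem_insert_iff, Set.mem_singleton_iff] at hx
  simp only [List.mem_cons, List.not_mem_nil, or_false]
  omega
lemma evF1 : ∀ x ∈ F1.Ev, x ∈ [1,2,3,4,5,6] := by
  intro x hx
  simp only [F1, forkTS, Set.mem_insert_iff, Set.mem_singleton_iff] at hx
  simp only [List.mem_cons, List.not_mem_nil, or_false]; omega

lemma comp_ev {P Q : TS ℕ} {LP LQ : List ℕ} (hP : ∀ x ∈ P.Ev, x ∈ LP)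
    (hQ : ∀ x ∈ Q.Ev, x ∈ LQ) : ∀ x ∈ (TS.comp P Q).Ev, x ∈ LP ++ LQ := by
  intro x hx
  rcases hx.1 with h | h
  · exact List.mem_append.2 (Or.inl (hP x h))
  · exact List.mem_append.2 (Or.inr (hQ x h))

lemma line_ev (a b c d : ℕ) : ∀ x ∈ (lineTS a b c d).Ev, x ∈ [a,b,c,d] := by
  intro x hx
  simp only [lineTS, Set.mem_insert_iff, Set.mem_singleton_iff] at hx
  simp only [List.mem_cons, List.not_mem_nil, or_false]
  tauto

lemma evP1 : ∀ x ∈ P1.Ev, x ∈ [1,2,3,4,5,6]++[2,20,30,3] := comp_ev evF1 (line_ev 2 20 30 3)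
lemma evP2 : ∀ x ∈ P2.Ev, x ∈ ([1,2,3,4,5,6]++[2,20,30,3])++[20,21,31,30] := comp_ev evP1 (line_ev _ _ _ _)
lemma evP3 : ∀ x ∈ P3.Ev, x ∈ (([1,2,3,4,5,6]++[2,20,30,3])++[20,21,31,30])++[21,22,32,31] := comp_ev evP2 (line_ev _ _ _ _)
lemma evP4 : ∀ x ∈ P4.Ev, x ∈ ((([1,2,3,4,5,6]++[2,20,30,3])++[20,21,31,30])++[21,22,32,31])++[22,23,33,32] := comp_ev evP3 (line_ev _ _ _ _)
lemma evP5 : ∀ x ∈ P5.Ev, x ∈ (((([1,2,3,4,5,6]++[2,20,30,3])++[20,21,31,30])++[21,22,32,31])++[22,23,33,32])++[23,7,10,33] := comp_ev evP4 (line_ev _ _ _ _)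
lemma evP6 : ∀ x ∈ P6.Ev, x ∈ ((((([1,2,3,4,5,6]++[2,20,30,3])++[20,21,31,30])++[21,22,32,31])++[22,23,33,32])++[23,7,10,33])++[6,40,50,5] := comp_ev evP5 (line_ev _ _ _ _)
lemma evP7 : ∀ x ∈ P7.Ev, x ∈ (((((([1,2,3,4,5,6]++[2,20,30,3])++[20,21,31,30])++[21,22,32,31])++[22,23,33,32])++[23,7,10,33])++[6,40,50,5])++[40,41,51,50] := comp_ev evP6 (line_ev _ _ _ _)

lemma hB4 : ∀ x ∈ P2.Ev ∩ U3.Ev, x ∈ [21,31] := by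
  intro x hx
  have h1 := evP2 x hx.1
  have h2 := line_ev 21 22 32 31 x hx.2
  simp only [List.mem_cons, List.mem_append, List.not_mem_nil, or_false] at *
  omega

lemma hB5 : ∀ x ∈ P3.Ev ∩ U4.Ev, x ∈ [22,32] := by
  intro x hx
  have h1 := evP3 x hx.1
  have h2 := line_ev 22 23 33 32 x hx.2
  simp only [List.mem_cons, List.mem_append, List.not_mem_nil, or_false] at *
  omega

lemma hB6 : ∀ x ∈ P4.Ev ∩ U5.Ev, x ∈ [23,33] := by
  intro x hx
  have h1 := evP4 x hx.1
  have h2 := line_ev 23 7 10 33 x hx.2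
  simp only [List.mem_cons, List.mem_append, List.not_mem_nil, or_false] at *
  omega

lemma hB7 : ∀ x ∈ P5.Ev ∩ V1.Ev, x ∈ [5,6] := by
  intro x hx
  have h1 := evP5 x hx.1
  have h2 := line_ev 6 40 50 5 x hx.2
  simp only [List.mem_cons, List.mem_append, List.not_mem_nil, or_false] at *
  omega

lemma hB8 : ∀ x ∈ P6.Ev ∩ V2.Ev, x ∈ [40,50] := by
  intro x hx
  have h1 := evP6 x hx.1
  have h2 := line_ev 40 41 51 50 x hx.2
  simp only [List.mem_cons, List.mem_append, List.not_mem_nil, or_false] at *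
  omega

lemma hB9 : ∀ x ∈ P7.Ev ∩ V3.Ev, x ∈ [41,51] := by
  intro x hx
  have h1 := evP7 x hx.1
  have h2 := line_ev 41 11 12 51 x hx.2
  simp only [List.mem_cons, List.mem_append, List.not_mem_nil, or_false] at *
  omega

lemma evP8 : ∀ x ∈ P8.Ev, x ∈ ((((((([1,2,3,4,5,6]++[2,20,30,3])++[20,21,31,30])++[21,22,32,31])++[22,23,33,32])++[23,7,10,33])++[6,40,50,5])++[40,41,51,50])++[41,11,12,51] := comp_ev evP7 (line_ev _ _ _ _)

lemma evF2 : ∀ x ∈ F2.Ev, x ∈ [7,8,9,10,11,12] := by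
  intro x hx
  simp only [F2, forkTS, Set.mem_insert_iff, Set.mem_singleton_iff] at hx
  simp only [List.mem_cons, List.not_mem_nil, or_false]; omega

lemma hB10 : ∀ x ∈ P8.Ev ∩ F2.Ev, x ∈ [7,10,11,12] := by
  intro x hx
  have h1 := evP8 x hx.1
  have h2 := evF2 x hx.2
  simp only [List.mem_cons, List.mem_append, List.not_mem_nil, or_false] at *
  omega
lemma mem_comp_I {P Q : TS ℕ} {x : ℕ} {L : List ℕ} (h : x ∈ P.I)
    (hb : ∀ y ∈ P.Ev ∩ Q.Ev, y ∈ L) (hx : x ∉ L) : x ∈ (TS.comp P Q).I :=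
  ⟨Or.inl h, fun hc => hx (hb x hc)⟩

lemma one_mem_I : (1 : ℕ) ∈ OneWay.I := by
  have h0 : (1:ℕ) ∈ F1.I := by simp [F1, forkTS]
  have h1 : (1:ℕ) ∈ P1.I := mem_comp_I h0 hB2 (by decide)
  have h2 : (1:ℕ) ∈ P2.I := mem_comp_I h1 hB3 (by decide)
  have h3 : (1:ℕ) ∈ P3.I := mem_comp_I h2 hB4 (by decide)
  have h4 : (1:ℕ) ∈ P4.I := mem_comp_I h3 hB5 (by decide)
  have h5 : (1:ℕ) ∈ P5.I := mem_comp_I h4 hB6 (by decide)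
  have h6 : (1:ℕ) ∈ P6.I := mem_comp_I h5 hB7 (by decide)
  have h7 : (1:ℕ) ∈ P7.I := mem_comp_I h6 hB8 (by decide)
  have h8 : (1:ℕ) ∈ P8.I := mem_comp_I h7 hB9 (by decide)
  exact mem_comp_I h8 hB10 (by decide)

lemma agree_of_bound {τ τ' : ℕ → Bool} {H : Set ℕ} {L : List ℕ}
    (hH : ∀ x ∈ H, x ∈ L) (hag : ∀ a ∉ H, τ' a = τ a) :
    ∀ x ∉ L, τ' x = τ x := fun x hx => hag x fun h => hx (hH x h)

lemma agree_trans {f g h : ℕ → Bool} {L M : List ℕ}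
    (h1 : ∀ x ∉ L, f x = g x) (h2 : ∀ x ∉ M, g x = h x) :
    ∀ x ∉ L ++ M, f x = h x := fun x hx =>
  (h1 x fun hh => hx (List.mem_append.2 (Or.inl hh))).trans
    (h2 x fun hh => hx (List.mem_append.2 (Or.inr hh)))
abbrev St := (((((((((Fin 4 × Fin 4) × Fin 4) × Fin 4) × Fin 4) × Fin 4) × Fin 4) × Fin 4) × Fin 4) × Fin 4)

def step9 (s : St) (b : Bool) : St :=
  (((((((((forkNext s.1.1.1.1.1.1.1.1.1 false (s.1.1.1.1.1.1.1.1.2 == 2) (s.1.1.1.2 == 2),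
    lineNext s.1.1.1.1.1.1.1.1.2 (s.1.1.1.1.1.1.1.1.1 == 2) (s.1.1.1.1.1.1.1.2 == 2)),
    lineNext s.1.1.1.1.1.1.1.2 (s.1.1.1.1.1.1.1.1.2 == 1) (s.1.1.1.1.1.1.2 == 2)),
    lineNext s.1.1.1.1.1.1.2 (s.1.1.1.1.1.1.1.2 == 1) (s.1.1.1.1.1.2 == 2)),
    lineNext s.1.1.1.1.1.2 (s.1.1.1.1.1.1.2 == 1) (s.1.1.1.1.2 == 2)),
    lineNext s.1.1.1.1.2 (s.1.1.1.1.1.2 == 1) (s.2 == 1)),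
    lineNext s.1.1.1.2 (s.1.1.1.1.1.1.1.1.1 == 1) (s.1.1.2 == 2)),
    lineNext s.1.1.2 (s.1.1.1.2 == 1) (s.1.2 == 2)),
    lineNext s.1.2 (s.1.1.2 == 1) (s.2 == 1)),
    forkNext s.2 (s.1.1.1.1.2 == 1) b (s.1.2 == 1))

lemma step_lemma {s s' : St} {l : BExpr ℕ}
    (h : ((s, l, s') : OneWay.S × BExpr ℕ × OneWay.S) ∈ OneWay.Tran)
    {σ : ℕ → Bool} (hσ : l σ = true) (h1 : σ 1 = false) :
    σ 4 = (s.1.1.1.1.1.1.1.1.1 == 1) ∧ ∃ b : Bool, s' = step9 s b := by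
  obtain ⟨⟨⟨⟨⟨⟨⟨⟨⟨f1,u1⟩,u2⟩,u3⟩,u4⟩,u5⟩,v1⟩,v2⟩,v3⟩,f2⟩ := s
  obtain ⟨⟨⟨⟨⟨⟨⟨⟨⟨f1',u1'⟩,u2'⟩,u3'⟩,u4'⟩,u5'⟩,v1'⟩,v2'⟩,v3'⟩,f2'⟩ := s'
  have h' : ((((((((((f1,u1),u2),u3),u4),u5),v1),v2),v3),f2), l,
      (((((((((f1',u1'),u2'),u3'),u4'),u5'),v1'),v2'),v3'),f2')) ∈ (TS.comp P8 F2).Tran := h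
  obtain ⟨τ1, a10, l9, lF2, h9, hF2, hl9, hlF2⟩ := comp_peel h' hσ
  obtain ⟨τ2, a9, l8, lV3, h8, hV3, hl8, hlV3⟩ := comp_peel h9 hl9
  obtain ⟨τ3, a8, l7, lV2, h7, hV2, hl7, hlV2⟩ := comp_peel h8 hl8
  obtain ⟨τ4, a7, l6, lV1, h6, hV1, hl6, hlV1⟩ := comp_peel h7 hl7
  obtain ⟨τ5, a6, l5, lU5, h5, hU5, hl5, hlU5⟩ := comp_peel h6 hl6
  obtain ⟨τ6, a5, l4, lU4, h4, hU4, hl4, hlU4⟩ := comp_peel h5 hl5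
  obtain ⟨τ7, a4, l3, lU3, h3, hU3, hl3, hlU3⟩ := comp_peel h4 hl4
  obtain ⟨τ8, a3, l2, lU2, h2, hU2, hl2, hlU2⟩ := comp_peel h3 hl3
  obtain ⟨τ9, a2, lF1, lU1, hF1, hU1, hlF1, hlU1⟩ := comp_peel h2 hl2
  -- cumulative agreements from τ9
  have c9 : ∀ x ∉ [2,3], τ9 x = τ8 x := agree_of_bound hB2 a2
  have c8 : ∀ x ∉ [2,3]++[20,30], τ9 x = τ7 x := agree_trans c9 (agree_of_bound hB3 a3)
  have c7 : ∀ x ∉ [2,3]++[20,30]++[21,31], τ9 x = τ6 x := agree_trans c8 (agree_of_bound hB4 a4)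
  have c6 : ∀ x ∉ [2,3]++[20,30]++[21,31]++[22,32], τ9 x = τ5 x := agree_trans c7 (agree_of_bound hB5 a5)
  have c5 : ∀ x ∉ [2,3]++[20,30]++[21,31]++[22,32]++[23,33], τ9 x = τ4 x := agree_trans c6 (agree_of_bound hB6 a6)
  have c4 : ∀ x ∉ [2,3]++[20,30]++[21,31]++[22,32]++[23,33]++[5,6], τ9 x = τ3 x := agree_trans c5 (agree_of_bound hB7 a7)
  have c3 : ∀ x ∉ [2,3]++[20,30]++[21,31]++[22,32]++[23,33]++[5,6]++[40,50], τ9 x = τ2 x := agree_trans c4 (agree_of_bound hB8 a8)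
  have c2 : ∀ x ∉ [2,3]++[20,30]++[21,31]++[22,32]++[23,33]++[5,6]++[40,50]++[41,51], τ9 x = τ1 x := agree_trans c3 (agree_of_bound hB9 a9)
  have c1 : ∀ x ∉ [2,3]++[20,30]++[21,31]++[22,32]++[23,33]++[5,6]++[40,50]++[41,51]++[7,10,11,12], τ9 x = σ x := agree_trans c2 (agree_of_bound hB10 a10)
  -- component facts
  obtain ⟨e2, e4, e6, hf1'⟩ := fork_step hF1 hlF1
  obtain ⟨o20, o3, hu1'⟩ := line_step hU1 hlU1
  obtain ⟨o21, o30, hu2'⟩ := line_step hU2 hlU2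
  obtain ⟨o22, o31, hu3'⟩ := line_step hU3 hlU3
  obtain ⟨o23, o32, hu4'⟩ := line_step hU4 hlU4
  obtain ⟨o7, o33, hu5'⟩ := line_step hU5 hlU5
  obtain ⟨o40, o5, hv1'⟩ := line_step hV1 hlV1
  obtain ⟨o41, o50, hv2'⟩ := line_step hV2 hlV2
  obtain ⟨o11, o51, hv3'⟩ := line_step hV3 hlV3
  obtain ⟨o8, o10, o12, hf2'⟩ := fork_step hF2 hlF2
  replace hf1' : f1' = forkNext f1 (τ9 1) (τ9 3) (τ9 5) := hf1'
  replace hu1' : u1' = lineNext u1 (τ9 2) (τ9 30) := hu1'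
  replace hu2' : u2' = lineNext u2 (τ8 20) (τ8 31) := hu2'
  replace hu3' : u3' = lineNext u3 (τ7 21) (τ7 32) := hu3'
  replace hu4' : u4' = lineNext u4 (τ6 22) (τ6 33) := hu4'
  replace o7 : τ5 7 = (u5 == 1) := o7
  replace o33 : τ5 33 = (u5 == 2) := o33
  replace hu5' : u5' = lineNext u5 (τ5 23) (τ5 10) := hu5'
  replace o40 : τ4 40 = (v1 == 1) := o40
  replace o5 : τ4 5 = (v1 == 2) := o5
  replace hv1' : v1' = lineNext v1 (τ4 6) (τ4 50) := hv1'
  replace o41 : τ3 41 = (v2 == 1) := o41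
  replace o50 : τ3 50 = (v2 == 2) := o50
  replace hv2' : v2' = lineNext v2 (τ3 40) (τ3 51) := hv2'
  replace o11 : τ2 11 = (v3 == 1) := o11
  replace o51 : τ2 51 = (v3 == 2) := o51
  replace hv3' : v3' = lineNext v3 (τ2 41) (τ2 12) := hv3'
  replace o10 : τ1 10 = (f2 == 1) := o10
  replace o12 : τ1 12 = (f2 == 1) := o12
  replace hf2' : f2' = forkNext f2 (τ1 7) (τ1 9) (τ1 11) := hf2'
  -- input values
  have v1ev : τ9 1 = false := (c1 1 (by decide)).trans h1
  have v5 : τ9 5 = (v1 == 2) := (c5 5 (by decide)).trans o5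
  have v30 : τ9 30 = (u2 == 2) := (c9 30 (by decide)).trans o30
  have w20 : τ8 20 = (u1 == 1) := (c9 20 (by decide)).symm.trans o20
  have w31 : τ8 31 = (u3 == 2) := (c9 31 (by decide)).symm.trans ((c8 31 (by decide)).trans o31)
  have w21 : τ7 21 = (u2 == 1) := (c8 21 (by decide)).symm.trans ((c9 21 (by decide)).trans o21)
  have w32 : τ7 32 = (u4 == 2) := (c8 32 (by decide)).symm.trans ((c7 32 (by decide)).trans o32)
  have w22 : τ6 22 = (u3 == 1) := (c7 22 (by decide)).symm.trans ((c8 22 (by decide)).trans o22)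
  have w33 : τ6 33 = (u5 == 2) := (c7 33 (by decide)).symm.trans ((c6 33 (by decide)).trans o33)
  have w23 : τ5 23 = (u4 == 1) := (c6 23 (by decide)).symm.trans ((c7 23 (by decide)).trans o23)
  have w10 : τ5 10 = (f2 == 1) := (c6 10 (by decide)).symm.trans ((c2 10 (by decide)).trans o10)
  have w6 : τ4 6 = (f1 == 1) := (c5 6 (by decide)).symm.trans e6
  have w50 : τ4 50 = (v2 == 2) := (c5 50 (by decide)).symm.trans ((c4 50 (by decide)).trans o50)
  have w40 : τ3 40 = (v1 == 1) := (c4 40 (by decide)).symm.trans ((c5 40 (by decide)).trans o40)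
  have w51 : τ3 51 = (v3 == 2) := (c4 51 (by decide)).symm.trans ((c3 51 (by decide)).trans o51)
  have w41 : τ2 41 = (v2 == 1) := (c3 41 (by decide)).symm.trans ((c4 41 (by decide)).trans o41)
  have w12 : τ2 12 = (f2 == 1) := (c3 12 (by decide)).symm.trans ((c2 12 (by decide)).trans o12)
  have w7 : τ1 7 = (u5 == 1) := (c2 7 (by decide)).symm.trans ((c6 7 (by decide)).trans o7)
  have w11 : τ1 11 = (v3 == 1) := (c2 11 (by decide)).symm.trans ((c3 11 (by decide)).trans o11)
  refine ⟨(c1 4 (by decide)).symm.trans e4, τ1 9, ?_⟩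
  rw [v1ev, o3, v5] at hf1'
  rw [e2, v30] at hu1'
  rw [w20, w31] at hu2'
  rw [w21, w32] at hu3'
  rw [w22, w33] at hu4'
  rw [w23, w10] at hu5'
  rw [w6, w50] at hv1'
  rw [w40, w51] at hv2'
  rw [w41, w12] at hv3'
  rw [w7, w11] at hf2'
  rw [hf1', hu1', hu2', hu3', hu4', hu5', hv1', hv2', hv3', hf2']
  rfl
def RList : List St :=
  [(((((((((0,0),0),0),0),0),0),0),0),0),
   (((((((((0,0),0),0),0),0),0),0),0),1),
   (((((((((0,0),0),0),0),2),0),0),2),3),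
   (((((((((0,0),0),0),2),3),0),2),3),3),
   (((((((((0,0),0),2),3),3),2),3),3),3),
   (((((((((2,0),2),3),3),3),3),3),3),3),
   (((((((((3,3),3),3),3),3),3),3),3),3)]

lemma RList_closed_bool :
    RList.all (fun x => RList.elem (step9 x false) && RList.elem (step9 x true)) = true := by rfl

lemma RList_closed : ∀ x ∈ RList, ∀ b : Bool, step9 x b ∈ RList := by
  intro x hx b
  have h := List.all_eq_true.1 RList_closed_bool x hx
  rw [Bool.and_eq_true] at h
  cases b
  · exact List.mem_of_elem_eq_true h.1
  · exact List.mem_of_elem_eq_true h.2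

lemma RList_f1_bool : RList.all (fun x => !(x.1.1.1.1.1.1.1.1.1 == (1 : Fin 4))) = true := by rfl

lemma RList_f1 : ∀ x ∈ RList, (x.1.1.1.1.1.1.1.1.1 == (1 : Fin 4)) = false := by
  intro x hx
  have h := List.all_eq_true.1 RList_f1_bool x hx
  rwa [Bool.not_eq_true'] at h

theorem stmt16' (A : ℕ → Set ℕ) (hA : ∀ n, A n ⊆ OneWay.I)
    (hnoa : ∀ n, (1 : ℕ) ∉ A n)
    (r : ℕ → OneWay.S) (hr : TS.Run OneWay A r) :
    ∀ t : ℕ, ¬ TS.EmitsAt OneWay A r 4 t := by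
  have hσ1 : ∀ n (σ : ℕ → Bool), (∀ a ∈ OneWay.I, (σ a = true ↔ a ∈ A n)) → σ 1 = false := by
    intro n σ hm
    have h := hm 1 one_mem_I
    cases hv : σ 1 with
    | false => rfl
    | true => exact absurd (h.1 hv) (hnoa n)
  have key : ∀ n, (r n : St) ∈ RList := by
    intro n
    induction n with
    | zero =>
      have h0 : r 0 = ((((((((((0,0),0),0),0),0),0),0),0),0) : St) := hr.1
      rw [h0]
      exact List.mem_cons_self
    | succ n ih =>
      obtain ⟨l, htr, σ, hm, hlσ⟩ := hr.2 n
      obtain ⟨-, b, hs'⟩ := step_lemma htr hlσ (hσ1 n σ hm)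
      rw [show (r (n+1) : St) = step9 (r n) b from hs']
      exact RList_closed _ ih b
  intro t hemit
  obtain ⟨l, htr, ⟨σ, hm, hlσ⟩, hforce⟩ := hemit
  obtain ⟨h4, -⟩ := step_lemma htr hlσ (hσ1 t σ hm)
  have h4t : σ 4 = true := hforce σ hlσ
  rw [h4t, RList_f1 _ (key t)] at h4
  exact Bool.true_eq_false.mp h4

/-- in every run of the one-way line in which input a₁ (= 1) never
occurs, output d₁ (= 4) never occurs: c₂ never causes d₁. -/
theorem stmt16 (A : ℕ → Set ℕ) (hA : ∀ n, A n ⊆ OneWay.I)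
    (hnoa : ∀ n, (1 : ℕ) ∉ A n)
    (r : ℕ → OneWay.S) (hr : TS.Run OneWay A r) :
    ∀ t : ℕ, ¬ TS.EmitsAt OneWay A r 4 t := by
  exact stmt16' A hA hnoa r hr
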